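/- For variables a₁,…,a_m in a commutative ring with ∏_{i=1}^m a_i = 0, and any polynomial P over the ring, one has ∑_{l=0}^m (-1)^l ∑_{S ⊆ {1,…,m}, |S|=l} P(∑_{j∉S} a_j) = 0. -/

import Mathlib

open Finset Polynomial

lemma aux_key {R : Type*} [CommRing R] {ι : Type*} [DecidableEq ι] (a : ι → R)
    (s : Finset ι) : ∀ (P : Polynomial R) (x : R),
    (∏ i ∈ s, a i) ∣ ∑ T ∈ s.powerset, (-1 : R) ^ T.card *
      P.eval (x + ∑ j ∈ s \ T, a j) := by
  classical
  induction s using Finset.induction_on with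
  | empty => intro P x; simp
  | insert i s hi hiIH =>
    intro P x
    -- D = P.comp (X + C (a i)) - P is divisible by C (a i)
    have hdvd : (C (a i)) ∣ P.comp (X + C (a i)) - P := by
      have := Polynomial.sub_dvd_eval_sub (X + C (a i)) (X : Polynomial R)
        (P.map (C : R →+* Polynomial R))
      simpa [Polynomial.eval_map, Polynomial.comp, Polynomial.eval₂_map] using this
    obtain ⟨Q, hQ⟩ := hdvd
    have hs : ∑ T ∈ (insert i s).powerset, (-1 : R) ^ T.card *
        P.eval (x + ∑ j ∈ (insert i s) \ T, a j)
        = a i * ∑ T ∈ s.powerset, (-1 : R) ^ T.card *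
            Q.eval (x + ∑ j ∈ s \ T, a j) := by
      rw [Finset.sum_powerset_insert hi, Finset.mul_sum, ← Finset.sum_add_distrib]
      refine Finset.sum_congr rfl fun T hT => ?_
      rw [Finset.mem_powerset] at hT
      have hiT : i ∉ T := fun h => hi (hT h)
      have h1 : (insert i s) \ T = insert i (s \ T) := by
        rw [Finset.insert_sdiff_of_notMem _ hiT]
      have h2 : (insert i s) \ (insert i T) = s \ T := by
        ext x; simp only [Finset.mem_sdiff, Finset.mem_insert]
        constructor
        · rintro ⟨hx, hx'⟩
          rcases hx with rfl | hx
          · exact absurd (Or.inl rfl) hx'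
          · exact ⟨hx, fun h => hx' (Or.inr h)⟩
        · rintro ⟨hx, hx'⟩
          exact ⟨Or.inr hx, by rintro (rfl | h) <;> [exact hi hx; exact hx' h]⟩
      have hiS : i ∉ s \ T := fun h => hi (Finset.mem_sdiff.mp h).1
      rw [h1, h2, Finset.card_insert_of_notMem hiT,
        Finset.sum_insert hiS]
      have hQe : ∀ y : R, a i * Q.eval y = P.eval (y + a i) - P.eval y := by
        intro y
        have := congrArg (Polynomial.eval y) hQ
        simpa [mul_comm] using this.symm
      have := hQe (x + ∑ j ∈ s \ T, a j)
      ring_nf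
      ring_nf at this
      have harg : a i + x + ∑ j ∈ s \ T, a j = x + a i + ∑ j ∈ s \ T, a j := by ring
      rw [harg] at this
      linear_combination (-(-1 : R) ^ T.card) * this
    rw [hs, Finset.prod_insert hi]
    exact mul_dvd_mul_left _ (hiIH Q x)

/-- Inclusion–exclusion observation (*) of Example 3.5: if the product of
`a 1, …, a m` is zero in a commutative ring, then for any polynomial `P`,
`∑_{l=0}^m (-1)^l ∑_{|S|=l} P(∑_{j∉S} a j) = 0`. -/
theorem statement_0 {R : Type*} [CommRing R] (m : ℕ) (a : Fin m → R)
    (hprod : ∏ i, a i = 0) (P : Polynomial R) :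
    ∑ l ∈ Finset.range (m + 1), (-1 : R) ^ l *
      ∑ S ∈ Finset.powersetCard l (Finset.univ : Finset (Fin m)),
        P.eval (∑ j ∈ Finset.univ \ S, a j) = 0 := by
  have h := aux_key a (Finset.univ : Finset (Fin m)) P 0
  rw [hprod, zero_dvd_iff] at h
  rw [← h]
  rw [Finset.sum_powerset]
  simp only [Finset.card_univ, Fintype.card_fin, Finset.mul_sum, zero_add]
  refine Finset.sum_congr rfl fun l hl => Finset.sum_congr rfl fun S hS => ?_
  rw [Finset.mem_powersetCard] at hS
  rw [hS.2]
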